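/- Let A be a normal complex n×n matrix of rank r with nonzero eigenvalues λ_1, …, λ_r, and let B be an invertible normal complex n×n matrix with eigenvalues λ̂_1, …, λ̂_n. Set F̂ = Σ_{j=1}^r |λ_j|² + Σ_{j=1}^n |λ̂_j|². Then ‖ |A| − |B| ‖_F ≤ sqrt( max_σ (F̂ − 2 Σ_{j=1}^r |λ̂_{σ(j)}| |λ_j|) / (F̂ − 2 Σ_{j=1}^r Re(λ̂_{σ(j)} · conj(λ_j))) ) · ‖A − B‖_F, where the maximum is taken over all injective maps σ from {1, …, r} into {1, …, n}. -/

import Mathlib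

open scoped BigOperators Matrix ComplexOrder

noncomputable def frob {m n : ℕ} (A : Matrix (Fin m) (Fin n) ℂ) : ℝ :=
  Real.sqrt (∑ i, ∑ j, ‖A i j‖ ^ 2)

noncomputable def absMat {m n : ℕ} (A : Matrix (Fin m) (Fin n) ℂ) :
    Matrix (Fin n) (Fin n) ℂ :=
  (Matrix.isHermitian_conjTranspose_mul_self A).eigenvectorUnitary.1 *
    Matrix.diagonal (((↑) : ℝ → ℂ) ∘ (fun x => Real.sqrt x) ∘
      (Matrix.isHermitian_conjTranspose_mul_self A).eigenvalues) *
    (star (Matrix.isHermitian_conjTranspose_mul_self A).eigenvectorUnitary : Matrix (Fin n) (Fin n) ℂ)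

noncomputable def svdMat (m n r : ℕ) (σ : ℕ → ℝ) : Matrix (Fin m) (Fin n) ℂ :=
  Matrix.of fun i j =>
    if (i : ℕ) = (j : ℕ) ∧ (i : ℕ) < r then ((σ ((i : ℕ) + 1) : ℝ) : ℂ) else 0

/-- `A` admits a singular value decomposition with singular values
`σ 1, …, σ r` (indexed from 1) on the diagonal. -/
def HasSVD {m n : ℕ} (A : Matrix (Fin m) (Fin n) ℂ) (r : ℕ) (σ : ℕ → ℝ) : Prop :=
  ∃ (U : Matrix (Fin m) (Fin m) ℂ) (V : Matrix (Fin n) (Fin n) ℂ),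
    Uᴴ * U = 1 ∧ U * Uᴴ = 1 ∧ Vᴴ * V = 1 ∧ V * Vᴴ = 1 ∧
    A = U * svdMat m n r σ * Vᴴ

/-- `σ 1 ≥ σ 2 ≥ … ≥ σ r > 0`. -/
def SingVals (r : ℕ) (σ : ℕ → ℝ) : Prop :=
  (∀ j, 1 ≤ j → j ≤ r → 0 < σ j) ∧ ∀ j, 1 ≤ j → j < r → σ (j + 1) ≤ σ j

/-- Generalized polar decomposition: `A = Q * |A|`, where `Q` is a rank-`r` partial
isometry such that the column space of `Qᴴ` equals the column space of `|A|`. -/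
def IsPolar {m n : ℕ} (A Q : Matrix (Fin m) (Fin n) ℂ) (r : ℕ) : Prop :=
  A = Q * absMat A ∧ Q * Qᴴ * Q = Q ∧ Q.rank = r ∧
    LinearMap.range (Matrix.mulVecLin Qᴴ) =
      LinearMap.range (Matrix.mulVecLin (absMat A))

/-- `A` is unitarily diagonalizable with eigenvalues `l 1, …, l r` (indexed from 1)
followed by zeros on the diagonal. -/
def HasEigen {n : ℕ} (A : Matrix (Fin n) (Fin n) ℂ) (r : ℕ) (l : ℕ → ℂ) : Prop :=
  ∃ U : Matrix (Fin n) (Fin n) ℂ, Uᴴ * U = 1 ∧ U * Uᴴ = 1 ∧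
    A = U * Matrix.diagonal (fun i : Fin n =>
      if (i : ℕ) < r then l ((i : ℕ) + 1) else 0) * Uᴴ

namespace KittanehAux

open Matrix Finset

variable {n : ℕ}

lemma S_eq (X : Matrix (Fin n) (Fin n) ℂ) :
    ∑ i, ∑ j, ‖X i j‖ ^ 2 = (Matrix.trace (Xᴴ * X)).re := by
  rw [Matrix.trace]
  simp only [Matrix.diag, Matrix.mul_apply, Matrix.conjTranspose_apply]
  rw [Complex.re_sum, Finset.sum_comm]
  refine Finset.sum_congr rfl fun i _ => ?_
  rw [Complex.re_sum]
  refine Finset.sum_congr rfl fun j _ => ?_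
  rw [RCLike.star_def, RCLike.conj_mul]
  norm_cast

lemma trace_diag_conj (W : Matrix (Fin n) (Fin n) ℂ) (f e : Fin n → ℂ) :
    Matrix.trace (Matrix.diagonal f * W * Matrix.diagonal e * Wᴴ) =
      ∑ j, ∑ i, f j * e i * ((‖W j i‖ ^ 2 : ℝ) : ℂ) := by
  rw [Matrix.trace]
  refine Finset.sum_congr rfl fun j _ => ?_
  rw [Matrix.diag]
  rw [Matrix.mul_apply]
  simp only [Matrix.mul_diagonal, Matrix.diagonal_mul, Matrix.conjTranspose_apply]
  refine Finset.sum_congr rfl fun i _ => ?_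
  have : W j i * star (W j i) = ((‖W j i‖ ^ 2 : ℝ) : ℂ) := by
    rw [RCLike.star_def, RCLike.mul_conj]; norm_cast
  calc f j * W j i * e i * star (W j i) = f j * e i * (W j i * star (W j i)) := by ring
    _ = f j * e i * ((‖W j i‖ ^ 2 : ℝ) : ℂ) := by rw [this]

lemma trace_formula (U V : Matrix (Fin n) (Fin n) ℂ) (d e : Fin n → ℂ) :
    Matrix.trace ((U * Matrix.diagonal d * Uᴴ)ᴴ * (V * Matrix.diagonal e * Vᴴ)) =
      ∑ j, ∑ i, (starRingEnd ℂ) (d j) * e i * ((‖(Uᴴ * V) j i‖ ^ 2 : ℝ) : ℂ) := by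
  have h1 : (U * Matrix.diagonal d * Uᴴ)ᴴ * (V * Matrix.diagonal e * Vᴴ) =
      U * ((Matrix.diagonal d)ᴴ * Uᴴ * (V * (Matrix.diagonal e * Vᴴ))) := by
    simp [Matrix.conjTranspose_mul, Matrix.mul_assoc]
  rw [h1, Matrix.trace_mul_comm]
  have h2 : (Matrix.diagonal d)ᴴ * Uᴴ * (V * (Matrix.diagonal e * Vᴴ)) * U =
      Matrix.diagonal (fun j => (starRingEnd ℂ) (d j)) * (Uᴴ * V) * Matrix.diagonal e *
        ((Uᴴ * V)ᴴ) := by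
    rw [Matrix.diagonal_conjTranspose]
    simp only [Matrix.conjTranspose_mul, Matrix.conjTranspose_conjTranspose, Matrix.mul_assoc]
    rfl
  rw [h2, trace_diag_conj]

lemma trace_self (U : Matrix (Fin n) (Fin n) ℂ) (hU1 : Uᴴ * U = 1) (d : Fin n → ℂ) :
    (Matrix.trace ((U * Matrix.diagonal d * Uᴴ)ᴴ * (U * Matrix.diagonal d * Uᴴ))).re =
      ∑ j, ‖d j‖ ^ 2 := by
  have hAd : (U * Matrix.diagonal d * Uᴴ)ᴴ = U * (Matrix.diagonal d)ᴴ * Uᴴ := by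
    simp [Matrix.conjTranspose_mul, Matrix.mul_assoc]
  have h1 : (U * Matrix.diagonal d * Uᴴ)ᴴ * (U * Matrix.diagonal d * Uᴴ) =
      U * ((Matrix.diagonal d)ᴴ * Matrix.diagonal d) * Uᴴ := by
    rw [hAd]
    calc U * (Matrix.diagonal d)ᴴ * Uᴴ * (U * Matrix.diagonal d * Uᴴ)
        = U * ((Matrix.diagonal d)ᴴ * ((Uᴴ * U) * (Matrix.diagonal d * Uᴴ))) := by
          simp only [Matrix.mul_assoc]
      _ = U * ((Matrix.diagonal d)ᴴ * Matrix.diagonal d) * Uᴴ := by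
          rw [hU1, Matrix.one_mul]
          simp only [Matrix.mul_assoc]
  rw [h1, Matrix.trace_mul_comm, ← Matrix.mul_assoc, hU1, Matrix.one_mul,
    Matrix.diagonal_conjTranspose, Matrix.diagonal_mul_diagonal, Matrix.trace_diagonal]
  rw [Complex.re_sum]
  refine Finset.sum_congr rfl fun j _ => ?_
  simp only [Pi.star_apply, RCLike.star_def, RCLike.conj_mul]
  norm_cast

lemma Sdiff (U V : Matrix (Fin n) (Fin n) ℂ) (hU1 : Uᴴ * U = 1) (hV1 : Vᴴ * V = 1)
    (d e : Fin n → ℂ) :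
    ∑ i, ∑ j, ‖(U * Matrix.diagonal d * Uᴴ - V * Matrix.diagonal e * Vᴴ) i j‖ ^ 2 =
      (∑ j, ‖d j‖ ^ 2) + (∑ j, ‖e j‖ ^ 2) -
        2 * ∑ j, ∑ i, ((starRingEnd ℂ) (d j) * e i).re * ‖(Uᴴ * V) j i‖ ^ 2 := by
  set A := U * Matrix.diagonal d * Uᴴ with hA
  set B := V * Matrix.diagonal e * Vᴴ with hB
  rw [S_eq]
  have hexp : (A - B)ᴴ * (A - B) = (Aᴴ * A - Aᴴ * B) - (Bᴴ * A - Bᴴ * B) := by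
    rw [Matrix.conjTranspose_sub, Matrix.sub_mul, Matrix.mul_sub, Matrix.mul_sub]
  rw [hexp, Matrix.trace_sub, Matrix.trace_sub, Matrix.trace_sub]
  have hBA : Matrix.trace (Bᴴ * A) = star (Matrix.trace (Aᴴ * B)) := by
    have h : Bᴴ * A = (Aᴴ * B)ᴴ := by
      simp [Matrix.conjTranspose_mul]
    rw [h, Matrix.trace_conjTranspose]
  have hre : (Matrix.trace (Aᴴ * B) + star (Matrix.trace (Aᴴ * B))).re =
      2 * (Matrix.trace (Aᴴ * B)).re := by
    simp [Complex.add_re, Complex.conj_re]; ring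
  have hAB : (Matrix.trace (Aᴴ * B)).re =
      ∑ j, ∑ i, ((starRingEnd ℂ) (d j) * e i).re * ‖(Uᴴ * V) j i‖ ^ 2 := by
    rw [hA, hB, trace_formula]
    rw [Complex.re_sum]
    refine Finset.sum_congr rfl fun j _ => ?_
    rw [Complex.re_sum]
    refine Finset.sum_congr rfl fun i _ => ?_
    rw [mul_comm, Complex.re_ofReal_mul, mul_comm]
  have key : (Matrix.trace (Aᴴ * A) - Matrix.trace (Aᴴ * B) -
      (Matrix.trace (Bᴴ * A) - Matrix.trace (Bᴴ * B))).re
      = (Matrix.trace (Aᴴ * A)).re + (Matrix.trace (Bᴴ * B)).re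
        - (Matrix.trace (Aᴴ * B) + star (Matrix.trace (Aᴴ * B))).re := by
    rw [hBA]; simp [Complex.sub_re, Complex.add_re]; ring
  rw [key, hre, hAB, hA, hB, trace_self U hU1 d, trace_self V hV1 e]

lemma absMat_eq (U : Matrix (Fin n) (Fin n) ℂ) (hU1 : Uᴴ * U = 1) (d : Fin n → ℂ) :
    absMat (U * Matrix.diagonal d * Uᴴ) =
      U * Matrix.diagonal (fun i => ((‖d i‖ : ℝ) : ℂ)) * Uᴴ := by
  set A := U * Matrix.diagonal d * Uᴴ with hA
  set S := U * Matrix.diagonal (fun i => ((‖d i‖ : ℝ) : ℂ)) * Uᴴ with hS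
  have hpsdD : Matrix.PosSemidef (Matrix.diagonal (fun i => ((‖d i‖ : ℝ) : ℂ))) :=
    Matrix.posSemidef_diagonal_iff.mpr fun i => by
      exact_mod_cast Complex.zero_le_real.mpr (norm_nonneg (d i))
  have hpsdS : S.PosSemidef := hpsdD.mul_mul_conjTranspose_same U
  have hsq : S ^ 2 = Aᴴ * A := by
    have hAd : Aᴴ = U * (Matrix.diagonal d)ᴴ * Uᴴ := by
      rw [hA]; simp [Matrix.conjTranspose_mul, Matrix.mul_assoc]
    have h2 : Aᴴ * A = U * ((Matrix.diagonal d)ᴴ * Matrix.diagonal d) * Uᴴ := by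
      rw [hAd, hA]
      calc U * (Matrix.diagonal d)ᴴ * Uᴴ * (U * Matrix.diagonal d * Uᴴ)
          = U * ((Matrix.diagonal d)ᴴ * ((Uᴴ * U) * (Matrix.diagonal d * Uᴴ))) := by
            simp only [Matrix.mul_assoc]
        _ = U * ((Matrix.diagonal d)ᴴ * Matrix.diagonal d) * Uᴴ := by
            rw [hU1, Matrix.one_mul]; simp only [Matrix.mul_assoc]
    have h3 : S ^ 2 = U * (Matrix.diagonal (fun i => ((‖d i‖ : ℝ) : ℂ)) *
        Matrix.diagonal (fun i => ((‖d i‖ : ℝ) : ℂ))) * Uᴴ := by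
      rw [pow_two, hS]
      calc U * Matrix.diagonal (fun i => ((‖d i‖ : ℝ) : ℂ)) * Uᴴ *
            (U * Matrix.diagonal (fun i => ((‖d i‖ : ℝ) : ℂ)) * Uᴴ)
          = U * (Matrix.diagonal (fun i => ((‖d i‖ : ℝ) : ℂ)) * ((Uᴴ * U) *
              (Matrix.diagonal (fun i => ((‖d i‖ : ℝ) : ℂ)) * Uᴴ))) := by
            simp only [Matrix.mul_assoc]
        _ = _ := by rw [hU1, Matrix.one_mul]; simp only [Matrix.mul_assoc]
    have hfun : (fun i => ((‖d i‖ : ℝ) : ℂ) * ((‖d i‖ : ℝ) : ℂ)) =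
        (fun i => star d i * d i) := by
      funext i
      simp only [Pi.star_apply, RCLike.star_def, RCLike.conj_mul, ← Complex.ofReal_mul]
      push_cast
      rw [sq]
      rfl
    rw [h3, h2, Matrix.diagonal_conjTranspose, Matrix.diagonal_mul_diagonal,
      Matrix.diagonal_mul_diagonal, hfun]
  open scoped MatrixOrder in
  have hH := Matrix.isHermitian_conjTranspose_mul_self A
  open scoped MatrixOrder in
  have e1 : absMat A = cfc Real.sqrt (Aᴴ * A) := by
    rw [hH.cfc_eq, Matrix.IsHermitian.cfc, Unitary.conjStarAlgAut_apply]; rfl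
  open scoped MatrixOrder in
  have e2 : cfc Real.sqrt (Aᴴ * A) = CFC.sqrt (Aᴴ * A) := by
    rw [CFC.sqrt_eq_cfc, cfc_nnreal_eq_real _ _ (Matrix.posSemidef_conjTranspose_mul_self A).nonneg]
    congr 1; funext x; rw [Real.sqrt]
  open scoped MatrixOrder in
  rw [e1, e2,
    CFC.sqrt_eq_iff _ _ (Matrix.posSemidef_conjTranspose_mul_self A).nonneg hpsdS.nonneg,
    ← sq, hsq]

lemma ds_mem (W : Matrix (Fin n) (Fin n) ℂ) (h1 : Wᴴ * W = 1) (h2 : W * Wᴴ = 1) :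
    Matrix.of (fun j i => ‖W j i‖ ^ 2) ∈ doublyStochastic ℝ (Fin n) := by
  rw [mem_doublyStochastic_iff_sum]
  refine ⟨fun i j => by simp only [Matrix.of_apply]; positivity, fun j => ?_, fun i => ?_⟩
  · have := congrArg (fun M => (M j j).re) h2
    simp only [Matrix.mul_apply, Matrix.conjTranspose_apply, Matrix.one_apply_eq] at this
    rw [Complex.re_sum, Complex.one_re] at this
    simp only [Matrix.of_apply]
    rw [← this]
    refine Finset.sum_congr rfl fun i _ => ?_
    rw [RCLike.star_def, RCLike.mul_conj]
    norm_cast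
  · have := congrArg (fun M => (M i i).re) h1
    simp only [Matrix.mul_apply, Matrix.conjTranspose_apply, Matrix.one_apply_eq] at this
    rw [Complex.re_sum, Complex.one_re] at this
    simp only [Matrix.of_apply]
    rw [← this]
    refine Finset.sum_congr rfl fun j _ => ?_
    rw [RCLike.star_def, RCLike.conj_mul]
    norm_cast

lemma core_ds (a c : Fin n → Fin n → ℝ) (Fh γ : ℝ)
    (hσ : ∀ σ : Equiv.Perm (Fin n),
      Fh - 2 * ∑ j, a j (σ j) ≤ γ * (Fh - 2 * ∑ j, c j (σ j)))
    (s : Matrix (Fin n) (Fin n) ℝ) (hs : s ∈ doublyStochastic ℝ (Fin n)) :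
    Fh - 2 * ∑ j, ∑ i, a j i * s j i ≤ γ * (Fh - 2 * ∑ j, ∑ i, c j i * s j i) := by
  obtain ⟨w, hw0, hw1, hws⟩ := exists_eq_sum_perm_of_mem_doublyStochastic hs
  have hsapp : ∀ j i, s j i = ∑ σ : Equiv.Perm (Fin n), w σ * (σ.permMatrix ℝ) j i := by
    intro j i
    rw [← hws]
    simp [Matrix.sum_apply, Matrix.smul_apply, smul_eq_mul]
  have hrep : ∀ f : Fin n → Fin n → ℝ,
      ∑ j, ∑ i, f j i * s j i = ∑ σ : Equiv.Perm (Fin n), w σ * ∑ j, f j (σ j) := by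
    intro f
    have hj : ∀ j, ∑ i, f j i * s j i = ∑ σ : Equiv.Perm (Fin n), w σ * f j (σ j) := by
      intro j
      calc ∑ i, f j i * s j i
          = ∑ i, ∑ σ : Equiv.Perm (Fin n), f j i * (w σ * (σ.permMatrix ℝ) j i) := by
            refine Finset.sum_congr rfl fun i _ => ?_
            rw [hsapp, Finset.mul_sum]
        _ = ∑ σ : Equiv.Perm (Fin n), ∑ i, f j i * (w σ * (σ.permMatrix ℝ) j i) :=
            Finset.sum_comm
        _ = ∑ σ : Equiv.Perm (Fin n), w σ * f j (σ j) := by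
            refine Finset.sum_congr rfl fun σ _ => ?_
            rw [Finset.sum_eq_single (σ j)]
            · simp only [Equiv.Perm.permMatrix, PEquiv.toMatrix_apply,
                Equiv.toPEquiv_apply, Option.mem_def, Option.some.injEq, if_pos rfl,
                if_true, mul_one]
              ring
            · intro b _ hb
              simp only [Equiv.Perm.permMatrix, PEquiv.toMatrix_apply,
                Equiv.toPEquiv_apply, Option.mem_def, Option.some.injEq]
              rw [if_neg (Ne.symm hb)]
              ring
            · intro h
              exact absurd (Finset.mem_univ _) h
    simp_rw [hj]
    rw [Finset.sum_comm]
    exact Finset.sum_congr rfl fun σ _ => (Finset.mul_sum _ _ _).symm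
  have hlin : ∀ f : Fin n → Fin n → ℝ,
      ∑ σ : Equiv.Perm (Fin n), w σ * (Fh - 2 * ∑ j, f j (σ j)) =
        Fh - 2 * ∑ j, ∑ i, f j i * s j i := by
    intro f
    rw [hrep f]
    calc ∑ σ : Equiv.Perm (Fin n), w σ * (Fh - 2 * ∑ j, f j (σ j))
        = (∑ σ : Equiv.Perm (Fin n), w σ * Fh) -
            ∑ σ : Equiv.Perm (Fin n), 2 * (w σ * ∑ j, f j (σ j)) := by
          rw [← Finset.sum_sub_distrib]
          exact Finset.sum_congr rfl fun σ _ => by ring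
      _ = Fh - 2 * ∑ σ : Equiv.Perm (Fin n), w σ * ∑ j, f j (σ j) := by
          rw [← Finset.sum_mul, hw1, one_mul, ← Finset.mul_sum]
  calc Fh - 2 * ∑ j, ∑ i, a j i * s j i
      = ∑ σ : Equiv.Perm (Fin n), w σ * (Fh - 2 * ∑ j, a j (σ j)) := (hlin a).symm
    _ ≤ ∑ σ : Equiv.Perm (Fin n), w σ * (γ * (Fh - 2 * ∑ j, c j (σ j))) :=
        Finset.sum_le_sum fun σ _ => mul_le_mul_of_nonneg_left (hσ σ) (hw0 σ)
    _ = γ * ∑ σ : Equiv.Perm (Fin n), w σ * (Fh - 2 * ∑ j, c j (σ j)) := by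
        rw [Finset.mul_sum]
        exact Finset.sum_congr rfl fun σ _ => by ring
    _ = γ * (Fh - 2 * ∑ j, ∑ i, c j i * s j i) := by rw [hlin c]

lemma sum_restrict {M : Type*} [AddCommMonoid M] {n r : ℕ} (hrn : r ≤ n) (F : Fin n → M)
    (h0 : ∀ j : Fin n, r ≤ (j : ℕ) → F j = 0) :
    ∑ j, F j = ∑ j : Fin r, F (Fin.castLE hrn j) := by
  classical
  have hmap : ∑ j : Fin r, F (Fin.castLE hrn j) =
      ∑ j ∈ Finset.univ.map (Fin.castLEEmb hrn), F j := by
    rw [Finset.sum_map]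
    rfl
  rw [hmap]
  refine (Finset.sum_subset (Finset.subset_univ _) fun j _ hj => h0 j ?_).symm
  by_contra hlt
  push_neg at hlt
  exact hj (Finset.mem_map.mpr ⟨⟨(j : ℕ), hlt⟩, Finset.mem_univ _, by
    simp [Fin.castLEEmb]⟩)

lemma sum_inj_le {n r : ℕ} (g : Fin r → Fin n) (hg : Function.Injective g)
    (F : Fin n → ℝ) (hF : ∀ i, 0 ≤ F i) :
    ∑ j : Fin r, F (g j) ≤ ∑ i, F i := by
  classical
  have : ∑ j : Fin r, F (g j) = ∑ i ∈ Finset.univ.image g, F i := by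
    rw [Finset.sum_image (fun a _ b _ h => hg h)]
  rw [this]
  exact Finset.sum_le_sum_of_subset_of_nonneg (Finset.subset_univ _) fun i _ _ => hF i

lemma sum_fin_icc (r : ℕ) (h : ℕ → ℝ) :
    ∑ j : Fin r, h ((j : ℕ) + 1) = ∑ j ∈ Finset.Icc 1 r, h j := by
  rw [Fin.sum_univ_eq_sum_range (fun j => h (j + 1)), ← Finset.Ico_add_one_right_eq_Icc,
    Finset.sum_Ico_eq_sum_range]
  simp [add_comm]

end KittanehAux

theorem sharp_upper_bound_kittaneh_full_rank
    (n r : ℕ) (hrn : r ≤ n)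
    (A B : Matrix (Fin n) (Fin n) ℂ)
    (hA : A * Aᴴ = Aᴴ * A) (hB : B * Bᴴ = Bᴴ * B)
    (l lh : ℕ → ℂ)
    (hAe : HasEigen A r l) (hBe : HasEigen B n lh)
    (hl : ∀ j, 1 ≤ j → j ≤ r → l j ≠ 0) (hlh : ∀ j, 1 ≤ j → j ≤ n → lh j ≠ 0)
    (hrankA : A.rank = r) (hBinv : IsUnit B.det)
    (Fh : ℝ)
    (hFh : Fh = ∑ j ∈ Finset.Icc 1 r, ‖l j‖ ^ 2 + ∑ j ∈ Finset.Icc 1 n, ‖lh j‖ ^ 2) :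
    frob (absMat A - absMat B) ≤
      Real.sqrt (sSup {x : ℝ | ∃ g : Fin r → Fin n, Function.Injective g ∧
        x = (Fh - 2 * ∑ j, ‖lh ((g j : ℕ) + 1)‖ * ‖l ((j : ℕ) + 1)‖) /
            (Fh - 2 * ∑ j, (lh ((g j : ℕ) + 1) *
               (starRingEnd ℂ) (l ((j : ℕ) + 1))).re)}) *
      frob (A - B) := by
  classical
  open KittanehAux Matrix Finset in
  obtain ⟨U, hU1, hU2, hAeq⟩ := hAe
  obtain ⟨V, hV1, hV2, hBeq⟩ := hBe
  set d : Fin n → ℂ := fun i => if (i : ℕ) < r then l ((i : ℕ) + 1) else 0 with hd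
  set e : Fin n → ℂ := fun i => lh ((i : ℕ) + 1) with he
  have hBeq' : B = V * Matrix.diagonal e * Vᴴ := by
    have hfe : (fun i : Fin n => if (i : ℕ) < n then lh ((i : ℕ) + 1) else 0) = e :=
      funext fun i => if_pos i.isLt
    rw [hBeq, hfe]
  have hd0 : ∀ j : Fin n, r ≤ (j : ℕ) → d j = 0 := fun j hj => if_neg (not_lt.mpr hj)
  have hdc : ∀ j : Fin r, d (Fin.castLE hrn j) = l ((j : ℕ) + 1) := by
    intro j
    simp only [hd, Fin.coe_castLE]
    exact if_pos j.isLt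
  -- Fh in terms of d, e
  have hFh2 : Fh = (∑ j, ‖d j‖ ^ 2) + ∑ j, ‖e j‖ ^ 2 := by
    rw [hFh]
    congr 1
    · rw [← sum_fin_icc r (fun j => ‖l j‖ ^ 2)]
      rw [sum_restrict hrn (fun j => ‖d j‖ ^ 2) (fun j hj => by
        show ‖d j‖ ^ 2 = 0; rw [hd0 j hj]; simp)]
      refine (Finset.sum_congr rfl fun j _ => ?_).symm
      rw [hdc j]
    · rw [← sum_fin_icc n (fun j => ‖lh j‖ ^ 2)]
  set W := Uᴴ * V with hW
  have hW1 : Wᴴ * W = 1 := by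
    rw [hW, Matrix.conjTranspose_mul, Matrix.conjTranspose_conjTranspose]
    calc Vᴴ * U * (Uᴴ * V) = Vᴴ * (U * Uᴴ) * V := by simp only [Matrix.mul_assoc]
      _ = 1 := by rw [hU2, Matrix.mul_one, hV1]
  have hW2 : W * Wᴴ = 1 := by
    rw [hW, Matrix.conjTranspose_mul, Matrix.conjTranspose_conjTranspose]
    calc Uᴴ * V * (Vᴴ * U) = Uᴴ * (V * Vᴴ) * U := by simp only [Matrix.mul_assoc]
      _ = 1 := by rw [hV2, Matrix.mul_one, hU1]
  set s : Matrix (Fin n) (Fin n) ℝ := Matrix.of (fun j i => ‖W j i‖ ^ 2) with hs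
  have hsds : s ∈ doublyStochastic ℝ (Fin n) := ds_mem W hW1 hW2
  set a : Fin n → Fin n → ℝ := fun j i => ‖d j‖ * ‖e i‖ with ha
  set c : Fin n → Fin n → ℝ := fun j i => ((starRingEnd ℂ) (d j) * e i).re with hc
  -- the two Frobenius norms squared
  have hS2 : ∑ i, ∑ j, ‖(A - B) i j‖ ^ 2 = Fh - 2 * ∑ j, ∑ i, c j i * s j i := by
    rw [hAeq, hBeq']
    rw [Sdiff U V hU1 hV1 d e, hFh2]
    rfl
  have hS1 : ∑ i, ∑ j, ‖(absMat A - absMat B) i j‖ ^ 2 =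
      Fh - 2 * ∑ j, ∑ i, a j i * s j i := by
    have habsA : absMat A = U * Matrix.diagonal (fun i => ((‖d i‖ : ℝ) : ℂ)) * Uᴴ := by
      rw [hAeq]; exact absMat_eq U hU1 d
    have habsB : absMat B = V * Matrix.diagonal (fun i => ((‖e i‖ : ℝ) : ℂ)) * Vᴴ := by
      rw [hBeq']; exact absMat_eq V hV1 e
    rw [habsA, habsB, Sdiff U V hU1 hV1 _ _, hFh2]
    have hnn : ∀ f : Fin n → ℂ, ∀ j, ‖((‖f j‖ : ℝ) : ℂ)‖ ^ 2 = ‖f j‖ ^ 2 := by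
      intro f j
      rw [Complex.norm_real, Real.norm_eq_abs, abs_of_nonneg (norm_nonneg _)]
    congr 1
    · congr 1
      · exact Finset.sum_congr rfl fun j _ => hnn d j
      · exact Finset.sum_congr rfl fun j _ => hnn e j
    · congr 1
      refine Finset.sum_congr rfl fun j _ => Finset.sum_congr rfl fun i _ => ?_
      congr 1
      rw [Complex.conj_ofReal, ← Complex.ofReal_mul, Complex.ofReal_re]
  -- the supremum
  set T : Set ℝ := {x : ℝ | ∃ g : Fin r → Fin n, Function.Injective g ∧
      x = (Fh - 2 * ∑ j, ‖lh ((g j : ℕ) + 1)‖ * ‖l ((j : ℕ) + 1)‖) /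
          (Fh - 2 * ∑ j, (lh ((g j : ℕ) + 1) * (starRingEnd ℂ) (l ((j : ℕ) + 1))).re)}
    with hT
  set N : (Fin r → Fin n) → ℝ :=
    fun g => Fh - 2 * ∑ j, ‖lh ((g j : ℕ) + 1)‖ * ‖l ((j : ℕ) + 1)‖ with hN
  set D : (Fin r → Fin n) → ℝ :=
    fun g => Fh - 2 * ∑ j, (lh ((g j : ℕ) + 1) * (starRingEnd ℂ) (l ((j : ℕ) + 1))).re
    with hD
  have hTsub : T ⊆ Set.range (fun g : Fin r → Fin n => N g / D g) := by
    rintro x ⟨g, hg, rfl⟩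
    exact ⟨g, rfl⟩
  have hbdd : BddAbove T :=
    ((Set.finite_range _).subset hTsub).bddAbove
  -- basic facts about N and D
  have hN0 : ∀ g : Fin r → Fin n, Function.Injective g → 0 ≤ N g := by
    intro g hg
    have h1 : ∑ j : Fin r, (2 * (‖lh ((g j : ℕ) + 1)‖ * ‖l ((j : ℕ) + 1)‖)) ≤
        (∑ j : Fin r, ‖l ((j : ℕ) + 1)‖ ^ 2) + ∑ j : Fin r, ‖lh ((g j : ℕ) + 1)‖ ^ 2 := by
      rw [← Finset.sum_add_distrib]
      refine Finset.sum_le_sum fun j _ => ?_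
      have := two_mul_le_add_sq (‖lh ((g j : ℕ) + 1)‖) (‖l ((j : ℕ) + 1)‖)
      calc 2 * (‖lh ((g j : ℕ) + 1)‖ * ‖l ((j : ℕ) + 1)‖)
          = 2 * ‖lh ((g j : ℕ) + 1)‖ * ‖l ((j : ℕ) + 1)‖ := by ring
        _ ≤ ‖lh ((g j : ℕ) + 1)‖ ^ 2 + ‖l ((j : ℕ) + 1)‖ ^ 2 := this
        _ = ‖l ((j : ℕ) + 1)‖ ^ 2 + ‖lh ((g j : ℕ) + 1)‖ ^ 2 := by ring
    have h2 : (∑ j : Fin r, ‖l ((j : ℕ) + 1)‖ ^ 2) = ∑ j, ‖d j‖ ^ 2 := by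
      rw [sum_restrict hrn (fun j => ‖d j‖ ^ 2) (fun j hj => by
        show ‖d j‖ ^ 2 = 0; rw [hd0 j hj]; simp)]
      exact (Finset.sum_congr rfl fun j _ => by rw [hdc j]).symm
    have h3 : (∑ j : Fin r, ‖lh ((g j : ℕ) + 1)‖ ^ 2) ≤ ∑ j, ‖e j‖ ^ 2 :=
      sum_inj_le g hg (fun i => ‖e i‖ ^ 2) (fun i => by positivity)
    have : 2 * ∑ j : Fin r, ‖lh ((g j : ℕ) + 1)‖ * ‖l ((j : ℕ) + 1)‖ ≤ Fh := by
      rw [Finset.mul_sum] at *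
      calc ∑ j : Fin r, 2 * (‖lh ((g j : ℕ) + 1)‖ * ‖l ((j : ℕ) + 1)‖)
          ≤ (∑ j : Fin r, ‖l ((j : ℕ) + 1)‖ ^ 2) +
              ∑ j : Fin r, ‖lh ((g j : ℕ) + 1)‖ ^ 2 := h1
        _ ≤ (∑ j, ‖d j‖ ^ 2) + ∑ j, ‖e j‖ ^ 2 := by
            rw [h2]; exact add_le_add_right h3 _
        _ = Fh := hFh2.symm
    simpa [hN] using sub_nonneg.mpr this
  have hNle : ∀ g : Fin r → Fin n, N g ≤ D g := by
    intro g
    have : ∀ j : Fin r, (lh ((g j : ℕ) + 1) * (starRingEnd ℂ) (l ((j : ℕ) + 1))).re ≤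
        ‖lh ((g j : ℕ) + 1)‖ * ‖l ((j : ℕ) + 1)‖ := by
      intro j
      calc (lh ((g j : ℕ) + 1) * (starRingEnd ℂ) (l ((j : ℕ) + 1))).re
          ≤ ‖lh ((g j : ℕ) + 1) * (starRingEnd ℂ) (l ((j : ℕ) + 1))‖ :=
            Complex.re_le_norm _
        _ = ‖lh ((g j : ℕ) + 1)‖ * ‖l ((j : ℕ) + 1)‖ := by
            rw [norm_mul, Complex.norm_conj]
    have hsum : ∑ j : Fin r, (lh ((g j : ℕ) + 1) * (starRingEnd ℂ) (l ((j : ℕ) + 1))).re ≤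
        ∑ j : Fin r, ‖lh ((g j : ℕ) + 1)‖ * ‖l ((j : ℕ) + 1)‖ :=
      Finset.sum_le_sum fun j _ => this j
    simp only [hN, hD]
    linarith
  have hmemT : ∀ g : Fin r → Fin n, Function.Injective g → N g / D g ∈ T := by
    intro g hg
    exact ⟨g, hg, rfl⟩
  set γ := sSup T with hγ
  have hinj0 : Function.Injective (Fin.castLE hrn) := Fin.castLE_injective hrn
  have hγ0 : 0 ≤ γ := by
    refine le_trans ?_ (le_csSup hbdd (hmemT _ hinj0))
    exact div_nonneg (hN0 _ hinj0) ((hN0 _ hinj0).trans (hNle _))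
  have hkey : ∀ g : Fin r → Fin n, Function.Injective g → N g ≤ γ * D g := by
    intro g hg
    have hx : N g / D g ≤ γ := le_csSup hbdd (hmemT g hg)
    rcases eq_or_lt_of_le ((hN0 g hg).trans (hNle g)) with h0 | hpos
    · have h1 : N g ≤ 0 := (hNle g).trans h0.ge
      have h2 : γ * D g = 0 := by rw [← h0, mul_zero]
      linarith [hN0 g hg]
    · rw [div_le_iff₀ hpos] at hx
      exact hx
  -- per-permutation inequality for core_ds
  have hperm : ∀ σ : Equiv.Perm (Fin n),
      Fh - 2 * ∑ j, a j (σ j) ≤ γ * (Fh - 2 * ∑ j, c j (σ j)) := by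
    intro σ
    set g : Fin r → Fin n := fun j => σ (Fin.castLE hrn j) with hg
    have hginj : Function.Injective g := fun x y hxy => hinj0 (σ.injective hxy)
    have hag : ∑ j, a j (σ j) = ∑ j : Fin r, ‖lh ((g j : ℕ) + 1)‖ * ‖l ((j : ℕ) + 1)‖ := by
      rw [sum_restrict hrn (fun j => a j (σ j)) (fun j hj => by
        show a j (σ j) = 0; simp only [ha]; rw [hd0 j hj]; simp)]
      refine Finset.sum_congr rfl fun j _ => ?_
      simp only [ha, hg]
      rw [hdc j, he]
      ring
    have hcg : ∑ j, c j (σ j) =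
        ∑ j : Fin r, (lh ((g j : ℕ) + 1) * (starRingEnd ℂ) (l ((j : ℕ) + 1))).re := by
      rw [sum_restrict hrn (fun j => c j (σ j)) (fun j hj => by
        show c j (σ j) = 0; simp only [hc]; rw [hd0 j hj]; simp)]
      refine Finset.sum_congr rfl fun j _ => ?_
      simp only [hc, hg]
      rw [hdc j, he]
      rw [mul_comm]
    rw [hag, hcg]
    exact hkey g hginj
  have hmain : ∑ i, ∑ j, ‖(absMat A - absMat B) i j‖ ^ 2 ≤
      γ * ∑ i, ∑ j, ‖(A - B) i j‖ ^ 2 := by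
    rw [hS1, hS2]
    exact core_ds a c Fh γ hperm s hsds
  rw [frob, frob, ← Real.sqrt_mul hγ0]
  exact Real.sqrt_le_sqrt hmain
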